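/- Suppose there are finitely many active messages, and each message m has a queue time qt(m) and a process time pt(m) with qt(m) < pt(m). Each message has a source rank and a destination rank, drawn from a finite set of ranks A. For a rank a and time t, let q_a(t) be the number of messages with source rank a whose queue time is strictly less than t, and p_a(t) the number of messages with destination rank a whose process time is strictly less than t. Assume there are times t⁻_a < t⁺_a for every rank a and a synchronization time t̄ with t⁻_a < t̄ < t⁺_a for all a, such that for every rank a: p_a(t⁻_a) = p_a(t⁺_a), q_a(t⁻_a) = q_a(t⁺_a), and moreover Σ_a q_a(t⁻_a) = Σ_a p_a(t⁻_a). Then for every pair of ranks (a,b) and every message m from a to b, if qt(m) < t⁻_a then pt(m) < t⁻_b; that is, every message queued by rank a before t⁻_a has been processed by its destination rank b before t⁻_b. -/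
import Mathlib


/-- Model of TaskTorrent's distributed completion algorithm (Lemma 1,
communication part): ranks form a finite type `A`, active messages a finite
type `M` with source `src`, destination `dst`, queue time `qt` and process
time `pt`, where each message is processed strictly after it is queued.
If there are times `tm a < tbar < tp a` for every rank `a` such that the
queued and processed counts of each rank agree at `tm a` and `tp a`, and the
total queued count equals the total processed count at the times `tm a`,
then every message queued by its source rank `a` before `tm a` has been
processed by its destination rank `b` before `tm b`. -/
theorem tasktorrent_completion_time_sequence
    {A M : Type*} [Fintype A] [Fintype M] [DecidableEq A]
    (src dst : M → A) (qt pt : M → ℝ)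
    (hqp : ∀ m, qt m < pt m)
    (tm tp : A → ℝ) (tbar : ℝ)
    (hsync : ∀ a, tm a < tbar ∧ tbar < tp a)
    (hp : ∀ a, (Finset.univ.filter (fun m => dst m = a ∧ pt m < tm a)).card
             = (Finset.univ.filter (fun m => dst m = a ∧ pt m < tp a)).card)
    (hq : ∀ a, (Finset.univ.filter (fun m => src m = a ∧ qt m < tm a)).card
             = (Finset.univ.filter (fun m => src m = a ∧ qt m < tp a)).card)
    (hsum : ∑ a : A, (Finset.univ.filter (fun m => src m = a ∧ qt m < tm a)).card
          = ∑ a : A, (Finset.univ.filter (fun m => dst m = a ∧ pt m < tm a)).card) :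
    ∀ m : M, qt m < tm (src m) → pt m < tm (dst m) := by
  classical
  -- per-rank: processed set at `tm a` equals processed set at `tbar`
  have hPset : ∀ a, Finset.univ.filter (fun m => dst m = a ∧ pt m < tm a)
      = Finset.univ.filter (fun m => dst m = a ∧ pt m < tbar) := by
    intro a
    apply Finset.eq_of_subset_of_card_le
    · intro x hx
      simp only [Finset.mem_filter] at hx ⊢
      exact ⟨hx.1, hx.2.1, hx.2.2.trans (hsync a).1⟩
    · calc (Finset.univ.filter (fun m => dst m = a ∧ pt m < tbar)).card
          ≤ (Finset.univ.filter (fun m => dst m = a ∧ pt m < tp a)).card := by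
            apply Finset.card_le_card
            intro x hx
            simp only [Finset.mem_filter] at hx ⊢
            exact ⟨hx.1, hx.2.1, hx.2.2.trans (hsync a).2⟩
        _ = _ := (hp a).symm
  have hQset : ∀ a, Finset.univ.filter (fun m => src m = a ∧ qt m < tm a)
      = Finset.univ.filter (fun m => src m = a ∧ qt m < tbar) := by
    intro a
    apply Finset.eq_of_subset_of_card_le
    · intro x hx
      simp only [Finset.mem_filter] at hx ⊢
      exact ⟨hx.1, hx.2.1, hx.2.2.trans (hsync a).1⟩
    · calc (Finset.univ.filter (fun m => src m = a ∧ qt m < tbar)).card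
          ≤ (Finset.univ.filter (fun m => src m = a ∧ qt m < tp a)).card := by
            apply Finset.card_le_card
            intro x hx
            simp only [Finset.mem_filter] at hx ⊢
            exact ⟨hx.1, hx.2.1, hx.2.2.trans (hsync a).2⟩
        _ = _ := (hq a).symm
  set B := Finset.univ.filter (fun m => qt m < tbar) with hB
  set P := Finset.univ.filter (fun m => pt m < tbar) with hPdef
  have hBcard : B.card
      = ∑ a : A, (Finset.univ.filter (fun m => src m = a ∧ qt m < tbar)).card := by
    rw [Finset.card_eq_sum_card_fiberwise
      (f := src) (t := Finset.univ) (fun x _ => Finset.mem_univ _)]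
    refine Finset.sum_congr rfl fun a _ => ?_
    congr 1
    rw [hB, Finset.filter_filter]
    exact Finset.filter_congr fun x _ => and_comm
  have hPcard : P.card
      = ∑ a : A, (Finset.univ.filter (fun m => dst m = a ∧ pt m < tbar)).card := by
    rw [Finset.card_eq_sum_card_fiberwise
      (f := dst) (t := Finset.univ) (fun x _ => Finset.mem_univ _)]
    refine Finset.sum_congr rfl fun a _ => ?_
    congr 1
    rw [hPdef, Finset.filter_filter]
    exact Finset.filter_congr fun x _ => and_comm
  have hcards : B.card = P.card := by
    rw [hBcard, hPcard]
    calc ∑ a : A, (Finset.univ.filter (fun m => src m = a ∧ qt m < tbar)).card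
        = ∑ a : A, (Finset.univ.filter (fun m => src m = a ∧ qt m < tm a)).card := by
          exact Finset.sum_congr rfl fun a _ => by rw [hQset a]
      _ = ∑ a : A, (Finset.univ.filter (fun m => dst m = a ∧ pt m < tm a)).card := hsum
      _ = ∑ a : A, (Finset.univ.filter (fun m => dst m = a ∧ pt m < tbar)).card := by
          exact Finset.sum_congr rfl fun a _ => by rw [hPset a]
  have hPB : P = B := by
    apply Finset.eq_of_subset_of_card_le
    · intro x hx
      simp only [hB, hPdef, Finset.mem_filter] at hx ⊢
      exact ⟨Finset.mem_univ x, (hqp x).trans hx.2⟩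
    · exact hcards.le
  intro m hm
  have hmB : m ∈ B := by
    simp only [hB, Finset.mem_filter]
    exact ⟨Finset.mem_univ m, hm.trans (hsync (src m)).1⟩
  have hmP : m ∈ P := by rw [hPB]; exact hmB
  have : m ∈ Finset.univ.filter (fun x => dst x = dst m ∧ pt x < tm (dst m)) := by
    rw [hPset (dst m)]
    simp only [hPdef, Finset.mem_filter] at hmP
    exact Finset.mem_filter.mpr ⟨Finset.mem_univ m, rfl, hmP.2⟩
  simpa using (Finset.mem_filter.mp this).2.2
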